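/- Let (R,≤),ρ be an extremal realisation of a family of configurations F. Then: (i) if r' ≤ r and ρ(r) = ρ(r') then r = r'; and (ii) if [r) = [r') and ρ(r) = ρ(r') then r = r', where [r) denotes [r] \ {r}, the set of strict predecessors of r. -/

import Mathlib

universe u v w

/-- The image of a set under a partial function. -/
def pimage {α : Type u} {β : Type v} (f : α → Option β) (x : Set α) : Set β :=
  {b | ∃ a ∈ x, f a = some b}

/-- A family of configurations over the set of events `A`:
a non-empty family of subsets, whose underlying set is all of `A`,
closed under unions of finitely compatible subfamilies,
and satisfying the securing-chain condition. -/
structure ConfigFamily (A : Type u) where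
  F : Set (Set A)
  nonempty : F.Nonempty
  covers : ∀ a : A, ∃ x ∈ F, a ∈ x
  unionClosed : ∀ X ⊆ F, (∀ Y ⊆ X, Y.Finite → ∃ z ∈ F, ∀ y ∈ Y, y ⊆ z) → ⋃₀ X ∈ F
  secured : ∀ x ∈ F, ∀ e ∈ x, ∃ l : List A, l ≠ [] ∧ l.getLast? = some e ∧
    (∀ a ∈ l, a ∈ x) ∧ ∀ i, 0 < i → i ≤ l.length → {a | a ∈ l.take i} ∈ F

/-- A causal realisation of the family `C`: a partial order whose
principal lower sets are finite, together with a function to events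
sending every down-closed subset to a configuration of the family. -/
structure Realisation {A : Type u} (C : ConfigFamily A) where
  carrier : Type u
  le : carrier → carrier → Prop
  le_refl : ∀ a, le a a
  le_trans : ∀ a b c, le a b → le b c → le a c
  le_antisymm : ∀ a b, le a b → le b a → a = b
  finPast : ∀ e, {e' | le e' e}.Finite
  ρ : carrier → A
  real : ∀ x : Set carrier, (∀ a ∈ x, ∀ b, le b a → b ∈ x) → ρ '' x ∈ C.F

namespace Realisation

variable {A : Type u} {C : ConfigFamily A}

/-- Down-closed subsets of the carrier of a realisation. -/
def IsDown (r : Realisation C) (x : Set r.carrier) : Prop :=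
  ∀ a ∈ x, ∀ b, r.le b a → b ∈ x

/-- The set `[a) = [a] \ {a}` of strict predecessors. -/
def spred (r : Realisation C) (a : r.carrier) : Set r.carrier :=
  {b | r.le b a ∧ b ≠ a}

/-- The carrier has a top element. -/
def HasTop (r : Realisation C) : Prop := ∃ t, ∀ a, r.le a t

end Realisation

/-- A map of realisations: a partial surjective function between the carriers,
preserving down-closed subsets and commuting with the functions to events. -/
structure RealMap {A : Type u} {C : ConfigFamily A} (r r' : Realisation C) where
  f : r.carrier → Option r'.carrier
  surj : ∀ b, ∃ a, f a = some b
  presDown : ∀ x, r.IsDown x → r'.IsDown (pimage f x)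
  commutes : ∀ a b, f a = some b → r.ρ a = r'.ρ b

namespace RealMap

variable {A : Type u} {C : ConfigFamily A} {r r' r₀ : Realisation C}

/-- The map is total. -/
def IsTotal (m : RealMap r r') : Prop := ∀ a, ∃ b, m.f a = some b

/-- The map is an isomorphism of realisations: it has an inverse map of
realisations, given by the inverse relation. -/
def IsIso (m : RealMap r r') : Prop :=
  ∃ m' : RealMap r' r, ∀ a b, m.f a = some b ↔ m'.f b = some a

/-- `m : r → r₀` is a projection witnessed by `g`: `g` realises the carrier of
`r₀` as a subset of the carrier of `r` with the restricted order and restricted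
function to events, and `m` is the inverse relation of this inclusion. -/
def IsProjectionVia (m : RealMap r r₀) (g : r₀.carrier → r.carrier) : Prop :=
  Function.Injective g ∧ (∀ a b, r₀.le a b ↔ r.le (g a) (g b)) ∧
    (∀ a, r₀.ρ a = r.ρ (g a)) ∧ (∀ a b, m.f a = some b ↔ g b = a)

/-- `m` is a projection. -/
def IsProjection (m : RealMap r r₀) : Prop := ∃ g, m.IsProjectionVia g

end RealMap

/-- A realisation is extremal when every total map of realisations from it
is an isomorphism. -/
def Realisation.Extremal {A : Type u} {C : ConfigFamily A} (r : Realisation C) : Prop :=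
  ∀ (r' : Realisation C) (m : RealMap r r'), m.IsTotal → m.IsIso

/-- A prime extremal realisation: extremal with a top element. -/
def Realisation.PrimeExtremal {A : Type u} {C : ConfigFamily A} (r : Realisation C) : Prop :=
  r.Extremal ∧ r.HasTop

/-- Isomorphism of realisations. -/
def RealIso {A : Type u} {C : ConfigFamily A} (r r' : Realisation C) : Prop :=
  ∃ m : RealMap r r', m.IsIso

/-- `m` is the composite of `m₁` followed by `m₂` (as partial functions). -/
def CompEq {A : Type u} {C : ConfigFamily A} {r r' r'' : Realisation C}
    (m₁ : RealMap r r') (m₂ : RealMap r' r'') (m : RealMap r r'') : Prop :=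
  ∀ a c, m.f a = some c ↔ ∃ b, m₁.f a = some b ∧ m₂.f b = some c

private lemma key_merge {A : Type u} {C : ConfigFamily A} (r : Realisation C)
    (hr : r.Extremal) (a b : r.carrier) (hne : a ≠ b) (hρ : r.ρ a = r.ρ b)
    (hba : ¬ r.le b a) (hab : ∀ d, r.le d a → d ≠ a → r.le d b) : False := by
  classical
  -- the modified order on the subtype with `b` removed
  set le' : {c : r.carrier // c ≠ b} → {c : r.carrier // c ≠ b} → Prop :=
    fun c d => r.le c.1 d.1 ∨ (r.le c.1 a ∧ r.le b d.1) with hle'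
  have hnotba : ∀ {c d : r.carrier}, r.le b c → r.le c d → r.le d a → False := by
    intro c d h1 h2 h3
    exact hba (r.le_trans _ _ _ (r.le_trans _ _ _ h1 h2) h3)
  -- the target realisation
  set r' : Realisation C :=
    { carrier := {c : r.carrier // c ≠ b}
      le := le'
      le_refl := fun c => Or.inl (r.le_refl c.1)
      le_trans := by
        rintro c d e (h1 | ⟨h1, h1'⟩) (h2 | ⟨h2, h2'⟩)
        · exact Or.inl (r.le_trans _ _ _ h1 h2)
        · exact Or.inr ⟨r.le_trans _ _ _ h1 h2, h2'⟩
        · exact Or.inr ⟨h1, r.le_trans _ _ _ h1' h2⟩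
        · exact Or.inr ⟨h1, h2'⟩
      le_antisymm := by
        rintro c d (h1 | ⟨h1, h1'⟩) (h2 | ⟨h2, h2'⟩)
        · exact Subtype.ext (r.le_antisymm _ _ h1 h2)
        · exact absurd (r.le_trans _ _ _ h2' h1) (fun h => hnotba (r.le_refl b) h h2)
        · exact absurd h1' (fun h => hnotba h h2 h1)
        · exact absurd h1' (fun h => hnotba h (r.le_refl _) h2)
      finPast := by
        intro e
        have : {d : {c : r.carrier // c ≠ b} | le' d e} ⊆
            Subtype.val ⁻¹' ({d | r.le d e.1} ∪ {d | r.le d a}) := by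
          rintro d (h | ⟨h, -⟩)
          · exact Or.inl h
          · exact Or.inr h
        exact Set.Finite.subset
          (Set.Finite.preimage Subtype.val_injective.injOn
            ((r.finPast e.1).union (r.finPast a))) this
      ρ := fun c => r.ρ c.1
      real := by
        intro x hx
        have himg : (fun (c : {c : r.carrier // c ≠ b}) => r.ρ c.1) '' x
            = r.ρ '' (Subtype.val '' x) := by
          rw [Set.image_image]
        by_cases h : ∃ c ∈ x, r.le b c.1
        · obtain ⟨c, hc, hbc⟩ := h
          have ha : (⟨a, hne⟩ : {c : r.carrier // c ≠ b}) ∈ x :=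
            hx c hc ⟨a, hne⟩ (Or.inr ⟨r.le_refl a, hbc⟩)
          have hy : r.ρ '' (Subtype.val '' x ∪ {b}) ∈ C.F := by
            apply r.real
            intro e he d hde
            rcases he with ⟨e', he', rfl⟩ | he
            · by_cases hdb : d = b
              · exact Or.inr (by simp [hdb])
              · exact Or.inl ⟨⟨d, hdb⟩, hx e' he' ⟨d, hdb⟩ (Or.inl hde), rfl⟩
            · simp only [Set.mem_singleton_iff] at he
              by_cases hdb : d = b
              · exact Or.inr (by simp [hdb])
              · refine Or.inl ⟨⟨d, hdb⟩, hx c hc ⟨d, hdb⟩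
                  (Or.inl (r.le_trans _ _ _ (he ▸ hde) hbc)), rfl⟩
          have heq : r.ρ '' (Subtype.val '' x ∪ {b}) = r.ρ '' (Subtype.val '' x) := by
            rw [Set.image_union]
            apply Set.union_eq_self_of_subset_right
            rintro y hy
            simp only [Set.image_singleton, Set.mem_singleton_iff] at hy
            subst hy
            exact ⟨a, ⟨⟨a, hne⟩, ha, rfl⟩, hρ⟩
          rw [himg, ← heq]; exact hy
        · push_neg at h
          rw [himg]
          apply r.real
          rintro e ⟨e', he', rfl⟩ d hde
          have hdb : d ≠ b := fun hd => h e' he' (hd ▸ hde)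
          exact ⟨⟨d, hdb⟩, hx e' he' ⟨d, hdb⟩ (Or.inl hde), rfl⟩ } with hr'def
  -- the map collapsing b to a
  set f : r.carrier → Option r'.carrier :=
    fun c => if h : c = b then some ⟨a, hne⟩ else some ⟨c, h⟩ with hf
  have hfval : ∀ (e : r.carrier) (c : r'.carrier), f e = some c →
      (e = b ∧ c = ⟨a, hne⟩) ∨ c.1 = e := by
    intro e c hec
    rw [hf] at hec
    dsimp only at hec
    by_cases he : e = b
    · rw [dif_pos he] at hec
      exact Or.inl ⟨he, (Option.some_injective _ hec).symm⟩
    · rw [dif_neg he] at hec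
      exact Or.inr (congrArg Subtype.val (Option.some_injective _ hec)).symm
  set m : RealMap r r' :=
    { f := f
      surj := by
        intro c
        refine ⟨c.1, ?_⟩
        simp only [hf, dif_neg c.2]
        rfl
      presDown := by
        intro x hx c' hc' d hdc'
        obtain ⟨e, he, hfe⟩ := hc'
        have hmem : ∀ e' ∈ x, e' ≠ b → d.1 = e' → d ∈ pimage f x := by
          intro e' he' hb' hd
          refine ⟨e', he', ?_⟩
          simp only [hf, dif_neg hb']
          exact congrArg some (Subtype.ext hd.symm)
        have hda : r.le d.1 a → b ∈ x → d ∈ pimage f x := by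
          intro hd hbx
          by_cases hdA : d.1 = a
          · refine ⟨b, hbx, ?_⟩
            simp only [hf, dif_pos]
            exact congrArg some (Subtype.ext hdA.symm)
          · have : r.le d.1 b := hab d.1 hd hdA
            exact hmem d.1 (hx b hbx d.1 this) d.2 rfl
        rcases hfval e c' hfe with ⟨rfl, rfl⟩ | hce
        · -- c' = ⟨a, hne⟩, b ∈ x
          rcases hdc' with hd | ⟨hd, hbd⟩
          · exact hda hd he
          · exact absurd hbd hba
        · -- c'.1 = e ∈ x
          rcases hdc' with hd | ⟨hd, hbd⟩
          · exact hmem d.1 (hx e he d.1 (hce ▸ hd)) d.2 rfl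
          · exact hda hd (hx e he b (hce ▸ hbd))
      commutes := by
        intro e c hec
        rcases hfval e c hec with ⟨rfl, rfl⟩ | hce
        · exact hρ.symm
        · subst hce
          rfl }
  have htot : m.IsTotal := by
    intro e
    by_cases he : e = b
    · exact ⟨⟨a, hne⟩, by simp [m, hf, he]⟩
    · exact ⟨⟨e, he⟩, by simp [m, hf, dif_neg he]⟩
  obtain ⟨m', hm'⟩ := hr r' m htot
  have h1 : m'.f ⟨a, hne⟩ = some a :=
    (hm' a ⟨a, hne⟩).mp (by simp [m, hf, dif_neg hne])
  have h2 : m'.f ⟨a, hne⟩ = some b :=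
    (hm' b ⟨a, hne⟩).mp (by simp [m, hf])
  exact hne (Option.some_injective _ (h1.symm.trans h2))

/-- For an extremal realisation: (i) comparable elements with equal images are
equal; (ii) elements with the same strict predecessors and equal images are
equal. -/
theorem stmt6 {A : Type u} (C : ConfigFamily A) (r : Realisation C)
    (hr : r.Extremal) :
    (∀ a b, r.le a b → r.ρ b = r.ρ a → a = b) ∧
    (∀ a b, r.spred a = r.spred b → r.ρ a = r.ρ b → a = b) := by
  classical
  constructor
  · intro a b hle hρ
    by_contra hne
    exact key_merge r hr a b hne hρ.symm
      (fun h => hne (r.le_antisymm _ _ hle h))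
      (fun d hd _ => r.le_trans _ _ _ hd hle)
  · intro a b hsp hρ
    by_contra hne
    have hba : ¬ r.le b a := fun h =>
      ((hsp ▸ (⟨h, Ne.symm hne⟩ : b ∈ r.spred a)) : b ∈ r.spred b).2 rfl
    have hab : ∀ d, r.le d a → d ≠ a → r.le d b := fun d hd hda =>
      ((hsp ▸ (⟨hd, hda⟩ : d ∈ r.spred a)) : d ∈ r.spred b).1
    exact key_merge r hr a b hne hρ hba hab
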